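/- Let n ≥ 2 be an integer and s ∈ (0,1). Let u : (0,∞) → ℝ be continuous and pointwise s-harmonic, that is, for every r > 0 the function τ ↦ [u(r) − u(rτ) + (u(r) − u(r/τ)) τ^{2s−n}] · τ (τ²−1)^{−1−2s} H(τ) is Lebesgue integrable on (1,∞) with ∫₁^∞ of it equal to 0. If u attains its supremum at some r̄ > 0, or attains its infimum at some r̄ > 0, then u is constant on (0,∞). -/

import Mathlib

open MeasureTheory

/-- The kernel `H(τ)` from the radial representation of the fractional Laplacian. -/
noncomputable def Hker (n : ℕ) (s τ : ℝ) : ℝ :=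
  2 * Real.pi * (Real.pi ^ (((n : ℝ) - 3) / 2) / Real.Gamma (((n : ℝ) - 1) / 2)) *
    ∫ θ in (0:ℝ)..Real.pi,
      Real.sin θ ^ (n - 2) *
        ((Real.sqrt (τ ^ 2 - Real.sin θ ^ 2) + Real.cos θ) ^ (1 + 2 * s) /
          Real.sqrt (τ ^ 2 - Real.sin θ ^ 2))

lemma sub_sin_pos {τ θ : ℝ} (hτ : 1 < τ) : 0 < τ ^ 2 - Real.sin θ ^ 2 := by
  nlinarith [Real.sin_sq_le_one θ]

lemma sqrt_add_cos_pos {τ θ : ℝ} (hτ : 1 < τ) :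
    0 < Real.sqrt (τ ^ 2 - Real.sin θ ^ 2) + Real.cos θ := by
  have h1 : Real.cos θ ^ 2 < τ ^ 2 - Real.sin θ ^ 2 := by
    nlinarith [Real.sin_sq_add_cos_sq θ]
  have h2 : |Real.cos θ| < Real.sqrt (τ ^ 2 - Real.sin θ ^ 2) := by
    rw [← Real.sqrt_sq_eq_abs]
    exact Real.sqrt_lt_sqrt (sq_nonneg _) h1
  have := neg_abs_le (Real.cos θ)
  linarith

lemma Hker_pos (n : ℕ) (hn : 2 ≤ n) {s : ℝ} (hs : 0 < s) {τ : ℝ} (hτ : 1 < τ) :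
    0 < Hker n s τ := by
  unfold Hker
  have hn2 : (2:ℝ) ≤ (n:ℝ) := by exact_mod_cast hn
  have hc : 0 < Real.pi ^ (((n : ℝ) - 3) / 2) / Real.Gamma (((n : ℝ) - 1) / 2) :=
    div_pos (Real.rpow_pos_of_pos Real.pi_pos _)
      (Real.Gamma_pos_of_pos (by linarith))
  have hden : ∀ θ : ℝ, Real.sqrt (τ ^ 2 - Real.sin θ ^ 2) ≠ 0 := fun θ =>
    ne_of_gt (Real.sqrt_pos.mpr (sub_sin_pos hτ))
  have hbase : Continuous fun θ : ℝ => Real.sqrt (τ ^ 2 - Real.sin θ ^ 2) + Real.cos θ := by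
    apply Continuous.add _ Real.continuous_cos
    exact Real.continuous_sqrt.comp (by continuity)
  have hF : Continuous fun θ : ℝ =>
      Real.sin θ ^ (n - 2) *
        ((Real.sqrt (τ ^ 2 - Real.sin θ ^ 2) + Real.cos θ) ^ (1 + 2 * s) /
          Real.sqrt (τ ^ 2 - Real.sin θ ^ 2)) := by
    apply Continuous.mul (Real.continuous_sin.pow _)
    apply Continuous.div
    · exact hbase.rpow_const fun θ => Or.inr (by positivity)
    · exact Real.continuous_sqrt.comp (by continuity)
    · exact hden
  have hI : 0 < ∫ θ in (0:ℝ)..Real.pi,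
      Real.sin θ ^ (n - 2) *
        ((Real.sqrt (τ ^ 2 - Real.sin θ ^ 2) + Real.cos θ) ^ (1 + 2 * s) /
          Real.sqrt (τ ^ 2 - Real.sin θ ^ 2)) := by
    apply intervalIntegral.intervalIntegral_pos_of_pos_on
      (hF.intervalIntegrable _ _) _ Real.pi_pos
    intro θ hθ
    have hsin : 0 < Real.sin θ := Real.sin_pos_of_pos_of_lt_pi hθ.1 hθ.2
    have := sqrt_add_cos_pos (θ := θ) hτ
    have hsq : 0 < Real.sqrt (τ ^ 2 - Real.sin θ ^ 2) := Real.sqrt_pos.mpr (sub_sin_pos hτ)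
    exact mul_pos (pow_pos hsin _) (div_pos (Real.rpow_pos_of_pos this _) hsq)
  have h2pi : 0 < 2 * Real.pi := by positivity
  exact mul_pos (mul_pos h2pi hc) hI

lemma ae_contra {P : ℝ → Prop} (hae : ∀ᵐ τ : ℝ, τ ∈ Set.Ioi (1:ℝ) → P τ)
    {τ0 : ℝ} (hτ0 : 1 < τ0) (hV : {τ : ℝ | ¬ P τ} ∈ nhds τ0) : False := by
  have hN : volume {τ : ℝ | ¬ (τ ∈ Set.Ioi (1:ℝ) → P τ)} = 0 := hae
  have hV' : {τ : ℝ | ¬ (τ ∈ Set.Ioi (1:ℝ) → P τ)} ∈ nhds τ0 := by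
    filter_upwards [hV, Ioi_mem_nhds hτ0] with τ h1 h2
    exact fun himp => h1 (himp h2)
  obtain ⟨U, hUsub, hUopen, hτU⟩ := mem_nhds_iff.mp hV'
  have hpos : 0 < volume U := hUopen.measure_pos volume ⟨τ0, hτU⟩
  have h0 : volume U = 0 := le_antisymm ((measure_mono hUsub).trans_eq hN) zero_le
  exact hpos.ne' h0

lemma key (n : ℕ) (hn : 2 ≤ n) (s : ℝ) (hs : s ∈ Set.Ioo (0:ℝ) 1)
    (u : ℝ → ℝ) (hcont : ContinuousOn u (Set.Ioi 0))
    (hharm : ∀ r > (0:ℝ),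
      IntegrableOn
        (fun τ : ℝ =>
          (u r - u (r * τ) + (u r - u (r / τ)) * τ ^ (2 * s - (n : ℝ))) *
            (τ * (τ ^ 2 - 1) ^ (-1 - 2 * s) * Hker n s τ))
        (Set.Ioi 1) ∧
      (∫ τ in Set.Ioi (1:ℝ),
          (u r - u (r * τ) + (u r - u (r / τ)) * τ ^ (2 * s - (n : ℝ))) *
            (τ * (τ ^ 2 - 1) ^ (-1 - 2 * s) * Hker n s τ)) = 0)
    (rb : ℝ) (hrb : 0 < rb) (hmax : ∀ r > (0:ℝ), u r ≤ u rb) :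
    ∀ r > (0:ℝ), u r = u rb := by
  obtain ⟨hint, hzero⟩ := hharm rb hrb
  have hw : ∀ τ : ℝ, 1 < τ → 0 < τ * (τ ^ 2 - 1) ^ (-1 - 2 * s) * Hker n s τ := by
    intro τ hτ
    have hτ0 : (0:ℝ) < τ := lt_trans one_pos hτ
    exact mul_pos (mul_pos hτ0 (Real.rpow_pos_of_pos (by nlinarith) _))
      (Hker_pos n hn hs.1 hτ)
  have hnn : 0 ≤ᵐ[volume.restrict (Set.Ioi 1)]
      fun τ : ℝ =>
        (u rb - u (rb * τ) + (u rb - u (rb / τ)) * τ ^ (2 * s - (n : ℝ))) *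
          (τ * (τ ^ 2 - 1) ^ (-1 - 2 * s) * Hker n s τ) := by
    apply (ae_restrict_iff' measurableSet_Ioi).mpr
    filter_upwards with τ hτ
    have hτ1 : (1:ℝ) < τ := hτ
    have hA : 0 ≤ u rb - u (rb * τ) :=
      sub_nonneg.mpr (hmax _ (mul_pos hrb (by linarith)))
    have hB : 0 ≤ u rb - u (rb / τ) :=
      sub_nonneg.mpr (hmax _ (div_pos hrb (by linarith)))
    have hp : (0:ℝ) ≤ τ ^ (2 * s - (n : ℝ)) :=
      (Real.rpow_pos_of_pos (by linarith) _).le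
    exact mul_nonneg (add_nonneg hA (mul_nonneg hB hp)) (hw τ hτ1).le
  have hfz := (integral_eq_zero_iff_of_nonneg_ae hnn hint).mp hzero
  have hae : ∀ᵐ τ : ℝ, τ ∈ Set.Ioi (1:ℝ) →
      u (rb * τ) = u rb ∧ u (rb / τ) = u rb := by
    have h := (ae_restrict_iff' measurableSet_Ioi).mp hfz
    filter_upwards [h] with τ h0 hτ
    have hτ1 : (1:ℝ) < τ := hτ
    have hf0 := h0 hτ
    have hwpos := hw τ hτ1
    have hsum : u rb - u (rb * τ) + (u rb - u (rb / τ)) * τ ^ (2 * s - (n : ℝ)) = 0 := by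
      rcases mul_eq_zero.mp hf0 with h' | h'
      · exact h'
      · exact absurd h' (ne_of_gt hwpos)
    have hA : 0 ≤ u rb - u (rb * τ) :=
      sub_nonneg.mpr (hmax _ (mul_pos hrb (by linarith)))
    have hB : 0 ≤ u rb - u (rb / τ) :=
      sub_nonneg.mpr (hmax _ (div_pos hrb (by linarith)))
    have hp : (0:ℝ) < τ ^ (2 * s - (n : ℝ)) := Real.rpow_pos_of_pos (by linarith) _
    have hBp : 0 ≤ (u rb - u (rb / τ)) * τ ^ (2 * s - (n : ℝ)) := mul_nonneg hB hp.le
    have hA0 : u rb - u (rb * τ) = 0 := le_antisymm (by linarith) hA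
    have hB0 : u rb - u (rb / τ) = 0 := by
      have : (u rb - u (rb / τ)) * τ ^ (2 * s - (n : ℝ)) = 0 := by linarith
      rcases mul_eq_zero.mp this with h' | h'
      · exact h'
      · exact absurd h' (ne_of_gt hp)
    constructor <;> linarith
  intro r hr
  rcases eq_or_ne r rb with rfl | hne
  · rfl
  by_contra hne2
  have hlt : u r < u rb := lt_of_le_of_ne (hmax r hr) hne2
  have hcr : ContinuousAt u r := hcont.continuousAt (Ioi_mem_nhds hr)
  rcases lt_or_gt_of_ne hne with hlt' | hgt'
  · -- r < rb, use second component with τ0 = rb / r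
    have hτ0 : 1 < rb / r := (one_lt_div hr).mpr hlt'
    have heq : rb / (rb / r) = r := by field_simp
    refine ae_contra (P := fun τ => u (rb / τ) = u rb)
      (hae.mono fun τ h hτ => (h hτ).2) hτ0 ?_
    have hg : ContinuousAt (fun τ : ℝ => u (rb / τ)) (rb / r) := by
      refine ContinuousAt.comp ?_ (continuousAt_const.div continuousAt_id (by positivity))
      show ContinuousAt u (rb / (rb / r))
      rw [heq]; exact hcr
    have hmem : (fun τ : ℝ => u (rb / τ)) ⁻¹' Set.Iio (u rb) ∈ nhds (rb / r) := by
      apply hg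
      show Set.Iio (u rb) ∈ nhds (u (rb / (rb / r)))
      rw [heq]
      exact Iio_mem_nhds hlt
    exact Filter.mem_of_superset hmem fun τ h => ne_of_lt h
  · -- rb < r, use first component with τ0 = r / rb
    have hτ0 : 1 < r / rb := (one_lt_div hrb).mpr hgt'
    have heq : rb * (r / rb) = r := by field_simp
    refine ae_contra (P := fun τ => u (rb * τ) = u rb)
      (hae.mono fun τ h hτ => (h hτ).1) hτ0 ?_
    have hg : ContinuousAt (fun τ : ℝ => u (rb * τ)) (r / rb) := by
      refine ContinuousAt.comp ?_ (continuousAt_const.mul continuousAt_id)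
      show ContinuousAt u (rb * (r / rb))
      rw [heq]; exact hcr
    have hmem : (fun τ : ℝ => u (rb * τ)) ⁻¹' Set.Iio (u rb) ∈ nhds (r / rb) := by
      apply hg
      show Set.Iio (u rb) ∈ nhds (u (rb * (r / rb)))
      rw [heq]
      exact Iio_mem_nhds hlt
    exact Filter.mem_of_superset hmem fun τ h => ne_of_lt h

/-- A continuous radial pointwise `s`-harmonic function which attains an absolute maximum
or an absolute minimum on `(0,∞)` must be constant. -/
theorem stmt_9 (n : ℕ) (hn : 2 ≤ n) (s : ℝ) (hs : s ∈ Set.Ioo (0:ℝ) 1)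
    (u : ℝ → ℝ) (hcont : ContinuousOn u (Set.Ioi 0))
    (hharm : ∀ r > (0:ℝ),
      IntegrableOn
        (fun τ : ℝ =>
          (u r - u (r * τ) + (u r - u (r / τ)) * τ ^ (2 * s - (n : ℝ))) *
            (τ * (τ ^ 2 - 1) ^ (-1 - 2 * s) * Hker n s τ))
        (Set.Ioi 1) ∧
      (∫ τ in Set.Ioi (1:ℝ),
          (u r - u (r * τ) + (u r - u (r / τ)) * τ ^ (2 * s - (n : ℝ))) *
            (τ * (τ ^ 2 - 1) ^ (-1 - 2 * s) * Hker n s τ)) = 0)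
    (hext : (∃ rb > (0:ℝ), ∀ r > (0:ℝ), u r ≤ u rb) ∨
            (∃ rb > (0:ℝ), ∀ r > (0:ℝ), u rb ≤ u r)) :
    ∀ r > (0:ℝ), ∀ r' > (0:ℝ), u r = u r' := by

  rcases hext with ⟨rb, hrb, hmax⟩ | ⟨rb, hrb, hmin⟩
  · have h := key n hn s hs u hcont hharm rb hrb hmax
    intro r hr r' hr'
    rw [h r hr, h r' hr']
  · set v : ℝ → ℝ := fun x => -u x with hv
    have hvcont : ContinuousOn v (Set.Ioi 0) := hcont.neg
    have hvharm : ∀ r > (0:ℝ),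
        IntegrableOn
          (fun τ : ℝ =>
            (v r - v (r * τ) + (v r - v (r / τ)) * τ ^ (2 * s - (n : ℝ))) *
              (τ * (τ ^ 2 - 1) ^ (-1 - 2 * s) * Hker n s τ))
          (Set.Ioi 1) ∧
        (∫ τ in Set.Ioi (1:ℝ),
            (v r - v (r * τ) + (v r - v (r / τ)) * τ ^ (2 * s - (n : ℝ))) *
              (τ * (τ ^ 2 - 1) ^ (-1 - 2 * s) * Hker n s τ)) = 0 := by
      intro r hr
      obtain ⟨h1, h2⟩ := hharm r hr
      have hfun : (fun τ : ℝ =>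
            (v r - v (r * τ) + (v r - v (r / τ)) * τ ^ (2 * s - (n : ℝ))) *
              (τ * (τ ^ 2 - 1) ^ (-1 - 2 * s) * Hker n s τ)) =
          fun τ : ℝ => -((u r - u (r * τ) + (u r - u (r / τ)) * τ ^ (2 * s - (n : ℝ))) *
              (τ * (τ ^ 2 - 1) ^ (-1 - 2 * s) * Hker n s τ)) := by
        funext τ; simp only [hv]; ring
      constructor
      · rw [hfun]; exact h1.neg
      · rw [hfun, integral_neg, h2, neg_zero]
    have h := key n hn s hs v hvcont hvharm rb hrb (fun r hr => neg_le_neg (hmin r hr))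
    intro r hr r' hr'
    have h1 := h r hr
    have h2 := h r' hr'
    simp only [hv, neg_inj] at h1 h2
    rw [h1, h2]
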